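/- arXiv:0806.2633 — 2 statements merged into one kernel-verified Lean document; each statement's English description precedes it below -/
import Mathlib

section
/- Let A₁,…,Aₙ be positive semidefinite n×n complex matrices and 0 < p < 1. Then n^{p−1} ∑ᵢ ‖Aᵢ‖ₚᵖ ≤ ‖∑ᵢ Aᵢ‖ₚᵖ ≤ ∑ᵢ ‖Aᵢ‖ₚᵖ, where ‖A‖ₚ = (tr(A^p))^{1/p} for positive semidefinite A. -/
open Matrix Polynomial Finset
open scoped ComplexOrder

variable {ι κ : Type*} [Fintype ι] [DecidableEq ι] [Fintype κ] [DecidableEq κ]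

lemma eval_charpoly' (M : Matrix ι ι ℂ) (z : ℂ) :
    (M.charpoly).eval z = (z • (1 : Matrix ι ι ℂ) - M).det := by
  rw [Matrix.charpoly, ← Polynomial.coe_evalRingHom, RingHom.map_det]
  congr 1
  ext i j
  by_cases h : i = j <;>
    simp [charmatrix_apply, Matrix.sub_apply, Matrix.smul_apply, Matrix.one_apply, h,
      Matrix.diagonal_apply]

lemma charpoly_mul_comm' (A B : Matrix ι ι ℂ) : (A * B).charpoly = (B * A).charpoly := by
  apply Polynomial.funext
  intro z
  rw [eval_charpoly', eval_charpoly']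
  rcases eq_or_ne z 0 with rfl | hz
  · simp [Matrix.det_neg, Matrix.det_mul, mul_comm]
  · have h1 : ∀ X Y : Matrix ι ι ℂ, z • (1 : Matrix ι ι ℂ) - X * Y
        = z • (1 + (-(z⁻¹ • X)) * Y) := by
      intro X Y
      rw [smul_add, neg_mul, smul_neg, smul_mul_assoc, smul_smul, mul_inv_cancel₀ hz, one_smul,
        sub_eq_add_neg]
    rw [h1 A B, show z • (1 : Matrix ι ι ℂ) - B * A = z • (1 + B * (-(z⁻¹ • A))) by
        rw [mul_neg, mul_smul_comm, smul_add, smul_neg, smul_smul, mul_inv_cancel₀ hz, one_smul,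
          sub_eq_add_neg],
      Matrix.det_smul, Matrix.det_smul, Matrix.det_one_add_mul_comm]

lemma charpoly_diagonal' (d : ι → ℂ) :
    (Matrix.diagonal d).charpoly = ∏ i, (X - C (d i)) := by
  apply Polynomial.funext
  intro z
  rw [eval_charpoly']
  have : z • (1 : Matrix ι ι ℂ) - Matrix.diagonal d = Matrix.diagonal (fun i => z - d i) := by
    ext i j
    by_cases h : i = j <;>
      simp [Matrix.sub_apply, Matrix.smul_apply, Matrix.one_apply, h, Matrix.diagonal_apply]
  rw [this, Matrix.det_diagonal]
  simp [eval_prod]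

lemma charpoly_unitary_conj (U : Matrix.unitaryGroup ι ℂ) (M : Matrix ι ι ℂ) :
    ((U : Matrix ι ι ℂ) * M * star (U : Matrix ι ι ℂ)).charpoly = M.charpoly := by
  rw [_root_.charpoly_mul_comm', ← mul_assoc, Matrix.UnitaryGroup.star_mul_self, one_mul]

lemma charpoly_fromBlocks (A : Matrix ι ι ℂ) (B : Matrix κ κ ℂ) :
    (Matrix.fromBlocks A 0 0 B).charpoly = A.charpoly * B.charpoly := by
  apply Polynomial.funext
  intro z
  rw [eval_charpoly', eval_mul, eval_charpoly', eval_charpoly']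
  have : z • (1 : Matrix (ι ⊕ κ) (ι ⊕ κ) ℂ) - Matrix.fromBlocks A 0 0 B
      = Matrix.fromBlocks (z • 1 - A) 0 0 (z • 1 - B) := by
    rw [← Matrix.fromBlocks_one, Matrix.fromBlocks_smul]
    ext (i | i) (j | j) <;> simp [Matrix.sub_apply]
  rw [this, Matrix.det_fromBlocks_zero₂₁]

lemma IsHermitian.charpoly_eq' {M : Matrix ι ι ℂ} (hM : M.IsHermitian) :
    M.charpoly = ∏ i, (X - C ((hM.eigenvalues i : ℝ) : ℂ)) := by
  conv_lhs => rw [hM.spectral_theorem, Unitary.conjStarAlgAut_apply]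
  rw [charpoly_unitary_conj, charpoly_diagonal']
  rfl

lemma roots_prod_eq (g : ι → ℝ) :
    (∏ i, (X - C ((g i : ℝ) : ℂ))).roots = Finset.univ.val.map (fun i => ((g i : ℝ) : ℂ)) := by
  rw [Finset.prod_eq_multiset_prod,
    show Multiset.map (fun i => X - C ((g i : ℝ) : ℂ)) Finset.univ.val
      = (Finset.univ.val.map (fun i => ((g i : ℝ) : ℂ))).map (fun a => X - C a) from
      (Multiset.map_map (fun a : ℂ => X - C a) (fun i => ((g i : ℝ) : ℂ)) Finset.univ.val).symm]
  exact Polynomial.roots_multiset_prod_X_sub_C _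

lemma sum_f_eig_eq {M : Matrix ι ι ℂ} (hM : M.IsHermitian) (d : κ → ℝ) (f : ℝ → ℝ)
    (h : M.charpoly = ∏ i, (X - C ((d i : ℝ) : ℂ))) :
    ∑ i, f (hM.eigenvalues i) = ∑ i, f (d i) := by
  have h2 : Finset.univ.val.map (fun i => ((hM.eigenvalues i : ℝ) : ℂ))
      = Finset.univ.val.map (fun i : κ => ((d i : ℝ) : ℂ)) := by
    rw [← roots_prod_eq hM.eigenvalues, ← roots_prod_eq d, ← IsHermitian.charpoly_eq' hM, ← h]
  have h3 := congrArg (fun s : Multiset ℂ => (s.map (fun z => f z.re)).sum) h2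
  simp only [Multiset.map_map, Function.comp_def, Complex.ofReal_re] at h3
  rw [Finset.sum_eq_multiset_sum, Finset.sum_eq_multiset_sum]
  exact h3

/-- sum of `p`-th powers of eigenvalues, as a function of the matrix only -/
noncomputable def eigSum (p : ℝ) (M : Matrix ι ι ℂ) : ℝ :=
  if h : M.IsHermitian then ∑ i, (h.eigenvalues i) ^ p else 0

lemma eigSum_eq {p : ℝ} {M : Matrix ι ι ℂ} (hM : M.IsHermitian) :
    eigSum p M = ∑ i, (hM.eigenvalues i) ^ p := dif_pos hM

lemma eigSum_eq_of_charpoly {p : ℝ} {M : Matrix ι ι ℂ} (hM : M.IsHermitian) (d : κ → ℝ)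
    (h : M.charpoly = ∏ i, (X - C ((d i : ℝ) : ℂ))) :
    eigSum p M = ∑ i, (d i) ^ p := by
  rw [eigSum_eq hM, sum_f_eig_eq hM d (fun x => x ^ p) h]

lemma eigSum_congr {p : ℝ} {M : Matrix ι ι ℂ} {N : Matrix κ κ ℂ}
    (hM : M.IsHermitian) (hN : N.IsHermitian) (h : M.charpoly = N.charpoly) :
    eigSum p M = eigSum p N := by
  rw [eigSum_eq_of_charpoly hM hN.eigenvalues (h.trans (IsHermitian.charpoly_eq' hN)), eigSum_eq hN]

lemma eigSum_concave {p : ℝ} (hp0 : 0 < p) (hp1 : p < 1) {τ : Type*} [Fintype τ]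
    (w : τ → ℝ) (hw : ∀ i, 0 ≤ w i) (hw1 : ∑ i, w i = 1)
    (Cm : τ → Matrix κ κ ℂ) (hC : ∀ i, (Cm i).PosSemidef)
    {S : Matrix κ κ ℂ} (hS : S.PosSemidef) (hSsum : S = ∑ i, ((w i : ℝ) : ℂ) • Cm i) :
    ∑ i, w i * eigSum p (Cm i) ≤ eigSum p S := by
  set Vm : Matrix κ κ ℂ := (hS.1.eigenvectorUnitary : Matrix κ κ ℂ) with hVm
  set μ : τ → κ → ℝ := fun i => (hC i).1.eigenvalues with hμ
  set W : τ → Matrix κ κ ℂ :=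
    fun i => star Vm * ((hC i).1.eigenvectorUnitary : Matrix κ κ ℂ) with hW
  have hVs : star Vm * Vm = 1 := Matrix.mem_unitaryGroup_iff'.mp (hS.1.eigenvectorUnitary).2
  have hVs' : Vm * star Vm = 1 := Matrix.mem_unitaryGroup_iff.mp (hS.1.eigenvectorUnitary).2
  have hstarW : ∀ i, star (W i)
      = star ((hC i).1.eigenvectorUnitary : Matrix κ κ ℂ) * Vm := by
    intro i
    rw [hW]
    simp only [StarMul.star_mul, star_star]
  have hWl : ∀ i, W i * star (W i) = 1 := by
    intro i
    rw [hstarW, hW]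
    rw [Matrix.mul_assoc, ← Matrix.mul_assoc ((hC i).1.eigenvectorUnitary : Matrix κ κ ℂ),
      Matrix.mem_unitaryGroup_iff.mp ((hC i).1.eigenvectorUnitary).2, one_mul, hVs]
  have hWr : ∀ i, star (W i) * W i = 1 := by
    intro i
    rw [hstarW, hW]
    rw [Matrix.mul_assoc, ← Matrix.mul_assoc Vm, hVs', one_mul,
      Matrix.mem_unitaryGroup_iff'.mp ((hC i).1.eigenvectorUnitary).2]
  have hterm : ∀ i j k, W i j k * star (W i) k j = ((Complex.normSq (W i j k) : ℝ) : ℂ) := by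
    intro i j k
    rw [Matrix.star_apply, Complex.star_def, Complex.mul_conj]
  have hterm' : ∀ i j k, star (W i) k j * W i j k = ((Complex.normSq (W i j k) : ℝ) : ℂ) := by
    intro i j k
    rw [mul_comm]; exact hterm i j k
  have hrow : ∀ i j, ∑ k, Complex.normSq (W i j k) = 1 := by
    intro i j
    have h1 := congrFun (congrFun (hWl i) j) j
    rw [Matrix.mul_apply, Matrix.one_apply_eq] at h1
    have h2 : (∑ k, W i j k * star (W i) k j)
        = ((∑ k, Complex.normSq (W i j k) : ℝ) : ℂ) := by
      rw [Complex.ofReal_sum]; exact Finset.sum_congr rfl fun k _ => hterm i j k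
    rw [h2] at h1
    exact_mod_cast h1
  have hcol : ∀ i k, ∑ j, Complex.normSq (W i j k) = 1 := by
    intro i k
    have h1 := congrFun (congrFun (hWr i) k) k
    rw [Matrix.mul_apply, Matrix.one_apply_eq] at h1
    have h2 : (∑ j, star (W i) k j * W i j k)
        = ((∑ j, Complex.normSq (W i j k) : ℝ) : ℂ) := by
      rw [Complex.ofReal_sum]; exact Finset.sum_congr rfl fun j _ => hterm' i j k
    rw [h2] at h1
    exact_mod_cast h1
  have hentry : ∀ i j, (star Vm * Cm i * Vm) j j
      = ((∑ k, Complex.normSq (W i j k) * μ i k : ℝ) : ℂ) := by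
    intro i j
    have hdec : star Vm * Cm i * Vm
        = W i * Matrix.diagonal (fun k => ((μ i k : ℝ) : ℂ)) * star (W i) := by
      conv_lhs => rw [(hC i).1.spectral_theorem, Unitary.conjStarAlgAut_apply]
      rw [hW, hstarW]
      have : Matrix.diagonal (RCLike.ofReal ∘ (hC i).1.eigenvalues)
          = Matrix.diagonal (fun k => ((μ i k : ℝ) : ℂ)) := rfl
      rw [this]
      simp only [Matrix.mul_assoc]
    rw [hdec, Matrix.mul_apply, Complex.ofReal_sum]
    refine Finset.sum_congr rfl fun k _ => ?_
    rw [Matrix.mul_diagonal, mul_comm (W i j k) ((μ i k : ℝ) : ℂ), mul_assoc, hterm i j k]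
    push_cast
    ring
  have heig : ∀ j, hS.1.eigenvalues j
      = ∑ i, ∑ k, (w i * Complex.normSq (W i j k)) * μ i k := by
    intro j
    have h1 : star Vm * S * Vm = Matrix.diagonal (RCLike.ofReal ∘ hS.1.eigenvalues) :=
      by have := hS.1.conjStarAlgAut_star_eigenvectorUnitary
         rwa [Unitary.conjStarAlgAut_apply, Unitary.coe_star, star_star] at this
    have h2 : ((hS.1.eigenvalues j : ℝ) : ℂ) = (star Vm * S * Vm) j j := by
      rw [h1]; simp [Matrix.diagonal_apply_eq]
    have h3 : star Vm * S * Vm = ∑ i, ((w i : ℝ) : ℂ) • (star Vm * Cm i * Vm) := by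
      rw [hSsum, Finset.mul_sum, Finset.sum_mul]
      exact Finset.sum_congr rfl fun i _ => by rw [Matrix.mul_smul, Matrix.smul_mul]
    have h2' := h2.trans (congrFun (congrFun h3 j) j)
    simp only [Matrix.sum_apply] at h2'
    apply Complex.ofReal_injective
    rw [h2', Complex.ofReal_sum]
    refine Finset.sum_congr rfl fun i _ => ?_
    rw [Matrix.smul_apply, hentry i j, smul_eq_mul]
    push_cast
    rw [Finset.mul_sum]
    exact Finset.sum_congr rfl fun k _ => by ring
  have hjensen : ∀ j, ∑ i, ∑ k, (w i * Complex.normSq (W i j k)) * (μ i k) ^ p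
      ≤ (hS.1.eigenvalues j) ^ p := by
    intro j
    have hcon := Real.concaveOn_rpow (le_of_lt hp0) (le_of_lt hp1)
    have hj := hcon.le_map_sum (t := (Finset.univ : Finset (τ × κ)))
      (w := fun ik => w ik.1 * Complex.normSq (W ik.1 j ik.2))
      (p := fun ik => μ ik.1 ik.2)
      (fun ik _ => mul_nonneg (hw ik.1) (Complex.normSq_nonneg _))
      (by rw [Fintype.sum_prod_type]
          calc ∑ i, ∑ k, w i * Complex.normSq (W i j k)
              = ∑ i, w i * ∑ k, Complex.normSq (W i j k) := by
                exact Finset.sum_congr rfl fun i _ => (Finset.mul_sum _ _ _).symm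
            _ = 1 := by simp only [hrow, mul_one, hw1])
      (fun ik _ => Set.mem_Ici.mpr ((hC ik.1).eigenvalues_nonneg ik.2))
    rw [Fintype.sum_prod_type] at hj
    simp only [smul_eq_mul] at hj
    refine le_trans (le_of_eq ?_) (le_trans hj (le_of_eq ?_))
    · rfl
    · congr 1
      rw [heig j, Fintype.sum_prod_type]
  rw [eigSum_eq hS.1]
  calc ∑ i, w i * eigSum p (Cm i)
      = ∑ i, ∑ k, w i * (μ i k) ^ p := by
        refine Finset.sum_congr rfl fun i _ => ?_
        rw [eigSum_eq (hC i).1, Finset.mul_sum]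
    _ = ∑ i, ∑ k, (∑ j, Complex.normSq (W i j k)) * (w i * (μ i k) ^ p) := by
        refine Finset.sum_congr rfl fun i _ => Finset.sum_congr rfl fun k _ => ?_
        rw [hcol i k, one_mul]
    _ = ∑ i, ∑ k, ∑ j, Complex.normSq (W i j k) * (w i * (μ i k) ^ p) := by
        exact Finset.sum_congr rfl fun i _ => Finset.sum_congr rfl fun k _ =>
          Finset.sum_mul _ _ _
    _ = ∑ i, ∑ j, ∑ k, Complex.normSq (W i j k) * (w i * (μ i k) ^ p) := by
        exact Finset.sum_congr rfl fun i _ => Finset.sum_comm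
    _ = ∑ j, ∑ i, ∑ k, Complex.normSq (W i j k) * (w i * (μ i k) ^ p) := Finset.sum_comm
    _ = ∑ j, ∑ i, ∑ k, (w i * Complex.normSq (W i j k)) * (μ i k) ^ p := by
        exact Finset.sum_congr rfl fun j _ => Finset.sum_congr rfl fun i _ =>
          Finset.sum_congr rfl fun k _ => by ring
    _ ≤ ∑ j, (hS.1.eigenvalues j) ^ p := Finset.sum_le_sum fun j _ => hjensen j

lemma eigSum_zero {p : ℝ} (hp0 : 0 < p) : eigSum p (0 : Matrix κ κ ℂ) = 0 := by
  rw [eigSum_eq_of_charpoly (Matrix.PosSemidef.zero (R := ℂ) (n := κ)).1 (fun _ : κ => (0 : ℝ))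
    (by rw [show (0 : Matrix κ κ ℂ) = Matrix.diagonal (fun _ : κ => ((0:ℝ):ℂ)) by simp,
      charpoly_diagonal'])]
  simp [Real.zero_rpow hp0.ne']

lemma isHermitian_fromBlocks {A : Matrix ι ι ℂ} {B : Matrix κ κ ℂ}
    (hA : A.IsHermitian) (hB : B.IsHermitian) :
    (Matrix.fromBlocks A 0 0 B).IsHermitian := by
  have : (Matrix.fromBlocks A 0 0 B)ᴴ = Matrix.fromBlocks Aᴴ 0ᴴ 0ᴴ Bᴴ :=
    Matrix.fromBlocks_conjTranspose A 0 0 B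
  rw [Matrix.IsHermitian, this, hA, hB]
  simp

lemma eigSum_fromBlocks {A : Matrix ι ι ℂ} {B : Matrix κ κ ℂ}
    (hA : A.IsHermitian) (hB : B.IsHermitian) (p : ℝ) :
    eigSum p (Matrix.fromBlocks A 0 0 B) = eigSum p A + eigSum p B := by
  rw [eigSum_eq_of_charpoly (isHermitian_fromBlocks hA hB)
      (Sum.elim hA.eigenvalues hB.eigenvalues) ?_, eigSum_eq hA, eigSum_eq hB]
  · simp [Fintype.sum_sum_type]
  · rw [charpoly_fromBlocks, IsHermitian.charpoly_eq' hA, IsHermitian.charpoly_eq' hB,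
      Fintype.prod_sum_type]
    simp

section
open scoped MatrixOrder

noncomputable def Matrix.PosSemidef.sqrt {A : Matrix κ κ ℂ} (_hA : A.PosSemidef) :
    Matrix κ κ ℂ := CFC.sqrt A

lemma Matrix.PosSemidef.posSemidef_sqrt {A : Matrix κ κ ℂ} (hA : A.PosSemidef) :
    hA.sqrt.PosSemidef := (CFC.sqrt_nonneg A).posSemidef

lemma Matrix.PosSemidef.sqrt_mul_self {A : Matrix κ κ ℂ} (hA : A.PosSemidef) :
    hA.sqrt * hA.sqrt = A := CFC.sqrt_mul_sqrt_self A hA.nonneg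

end

lemma posSemidef_real_smul {A : Matrix κ κ ℂ} (hA : A.PosSemidef) {c : ℝ} (hc : 0 ≤ c) :
    (((c : ℝ) : ℂ) • A).PosSemidef := by
  have h : ((c : ℝ) : ℂ) • A
      = (((Real.sqrt c : ℝ) : ℂ) • hA.sqrt)ᴴ * (((Real.sqrt c : ℝ) : ℂ) • hA.sqrt) := by
    rw [Matrix.conjTranspose_smul, hA.posSemidef_sqrt.1, Matrix.smul_mul, Matrix.mul_smul,
      smul_smul, hA.sqrt_mul_self]
    congr 1
    rw [Complex.star_def, Complex.conj_ofReal, ← Complex.ofReal_mul, Real.mul_self_sqrt hc]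
  rw [h]
  exact Matrix.posSemidef_conjTranspose_mul_self _

lemma eigSum_real_smul {A : Matrix κ κ ℂ} (hA : A.PosSemidef) {c : ℝ} (hc : 0 ≤ c)
    {p : ℝ} (hp0 : 0 < p) :
    eigSum p (((c : ℝ) : ℂ) • A) = c ^ p * eigSum p A := by
  have hsm : ((c : ℝ) : ℂ) • A = (hA.1.eigenvectorUnitary : Matrix κ κ ℂ)
      * Matrix.diagonal (fun i => ((c * hA.1.eigenvalues i : ℝ) : ℂ))
      * star (hA.1.eigenvectorUnitary : Matrix κ κ ℂ) := by
    conv_lhs => rw [hA.1.spectral_theorem, Unitary.conjStarAlgAut_apply]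
    rw [← Matrix.smul_mul, ← Matrix.mul_smul]
    congr 2
    have hco : (RCLike.ofReal ∘ hA.1.eigenvalues : κ → ℂ)
        = fun i => ((hA.1.eigenvalues i : ℝ) : ℂ) := rfl
    rw [hco]
    ext i j
    rcases eq_or_ne i j with rfl | h
    · rw [Matrix.smul_apply, Matrix.diagonal_apply_eq, Matrix.diagonal_apply_eq, smul_eq_mul,
        ← Complex.ofReal_mul]
    · rw [Matrix.smul_apply, Matrix.diagonal_apply_ne _ h, Matrix.diagonal_apply_ne _ h,
        smul_zero]
  rw [eigSum_eq_of_charpoly (posSemidef_real_smul hA hc).1 (fun i => c * hA.1.eigenvalues i)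
      (by rw [hsm, charpoly_unitary_conj, charpoly_diagonal']), eigSum_eq hA.1,
    Finset.mul_sum]
  exact Finset.sum_congr rfl fun i _ => Real.mul_rpow hc (hA.eigenvalues_nonneg i)

lemma eigSum_add_le {A B : Matrix κ κ ℂ} (hA : A.PosSemidef) (hB : B.PosSemidef)
    {p : ℝ} (hp0 : 0 < p) (hp1 : p < 1) :
    eigSum p (A + B) ≤ eigSum p A + eigSum p B := by
  set s := hA.sqrt with hsdef
  set t := hB.sqrt with htdef
  have hsH : sᴴ = s := hA.posSemidef_sqrt.1
  have htH : tᴴ = t := hB.posSemidef_sqrt.1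
  set X : Matrix (κ ⊕ κ) (κ ⊕ κ) ℂ := Matrix.fromBlocks s 0 t 0 with hXdef
  have hXH : Xᴴ = Matrix.fromBlocks s t 0 0 := by
    rw [hXdef, Matrix.fromBlocks_conjTranspose, hsH, htH]
    simp
  have h1 : Xᴴ * X = Matrix.fromBlocks (A + B) 0 0 0 := by
    rw [hXH, hXdef, Matrix.fromBlocks_multiply]
    simp [hsdef, htdef, hA.sqrt_mul_self, hB.sqrt_mul_self]
  have h2 : X * Xᴴ = Matrix.fromBlocks (s*s) (s*t) (t*s) (t*t) := by
    rw [hXH, hXdef, Matrix.fromBlocks_multiply]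
    simp
  set M := X * Xᴴ with hMdef
  have hM : M.PosSemidef := Matrix.posSemidef_self_mul_conjTranspose X
  set U : Matrix (κ ⊕ κ) (κ ⊕ κ) ℂ := Matrix.fromBlocks 1 0 0 (-1) with hUdef
  have hUH : Uᴴ = U := by
    rw [hUdef, Matrix.fromBlocks_conjTranspose]
    simp
  have hUU : U * U = 1 := by
    rw [hUdef, Matrix.fromBlocks_multiply]
    simp [Matrix.fromBlocks_one]
  have hN : (U * M * Uᴴ).PosSemidef := hM.mul_mul_conjTranspose_same U
  have hNM : eigSum p (U * M * Uᴴ) = eigSum p M := by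
    refine eigSum_congr hN.1 hM.1 ?_
    rw [hUH, _root_.charpoly_mul_comm' (U * M) U, ← Matrix.mul_assoc, hUU, one_mul]
  have hUMU : U * M * Uᴴ = Matrix.fromBlocks (s*s) (-(s*t)) (-(t*s)) (t*t) := by
    rw [hUH, h2, hUdef, Matrix.fromBlocks_multiply, Matrix.fromBlocks_multiply]
    simp
  have hD : Matrix.fromBlocks A 0 0 B
      = ((1/2 : ℝ) : ℂ) • M + ((1/2 : ℝ) : ℂ) • (U * M * Uᴴ) := by
    have hhalf : ∀ Y : Matrix κ κ ℂ, ((1/2:ℝ):ℂ) • Y + ((1/2:ℝ):ℂ) • Y = Y := by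
      intro Y
      rw [← add_smul]
      norm_num
    rw [hUMU, h2, Matrix.fromBlocks_smul, Matrix.fromBlocks_smul, Matrix.fromBlocks_add,
      smul_neg, smul_neg, add_neg_cancel, add_neg_cancel, hhalf, hhalf,
      hA.sqrt_mul_self, hB.sqrt_mul_self]
  have hDpsd : (Matrix.fromBlocks A 0 0 B).PosSemidef := by
    have : Matrix.fromBlocks A 0 0 B
        = (Matrix.fromBlocks s 0 0 t)ᴴ * (Matrix.fromBlocks s 0 0 t) := by
      rw [Matrix.fromBlocks_conjTranspose, Matrix.fromBlocks_multiply, hsH, htH]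
      simp [hsdef, htdef, hA.sqrt_mul_self, hB.sqrt_mul_self]
    rw [this]
    exact Matrix.posSemidef_conjTranspose_mul_self _
  have hcc := eigSum_concave hp0 hp1 (τ := Fin 2) ![1/2, 1/2]
    (by intro i; fin_cases i <;> norm_num)
    (by simp [Fin.sum_univ_two]; norm_num)
    ![M, U * M * Uᴴ]
    (by intro i; fin_cases i
        · exact hM
        · exact hN)
    hDpsd
    (by rw [hD]; rw [Fin.sum_univ_two]; rfl)
  rw [Fin.sum_univ_two] at hcc
  simp only [Matrix.cons_val_zero, Matrix.cons_val_one, Matrix.head_cons] at hcc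
  rw [hNM] at hcc
  have hMD : eigSum p M ≤ eigSum p (Matrix.fromBlocks A 0 0 B) := by
    calc eigSum p M = 1/2 * eigSum p M + 1/2 * eigSum p M := by ring
      _ ≤ _ := hcc
  have hABpsd := hA.add hB
  have hXX : (Xᴴ * X).PosSemidef := Matrix.posSemidef_conjTranspose_mul_self X
  have e1 : eigSum p (Xᴴ * X) = eigSum p M := eigSum_congr hXX.1 hM.1 (_root_.charpoly_mul_comm' _ _)
  have e2 : eigSum p (A + B) = eigSum p (Xᴴ * X) := by
    rw [h1, eigSum_fromBlocks hABpsd.1 (Matrix.PosSemidef.zero).1, eigSum_zero hp0, add_zero]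
  calc eigSum p (A + B) = eigSum p M := e2.trans e1
    _ ≤ eigSum p (Matrix.fromBlocks A 0 0 B) := hMD
    _ = eigSum p A + eigSum p B := eigSum_fromBlocks hA.1 hB.1 p

lemma posSemidef_sum {τ : Type*} (s : Finset τ) (A : τ → Matrix κ κ ℂ)
    (hA : ∀ i, (A i).PosSemidef) : (∑ i ∈ s, A i).PosSemidef := by
  induction s using Finset.cons_induction with
  | empty => simpa using Matrix.PosSemidef.zero
  | cons a s ha ih => rw [Finset.sum_cons]; exact (hA a).add ih

lemma eigSum_sum_le {τ : Type*} (s : Finset τ) (A : τ → Matrix κ κ ℂ)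
    (hA : ∀ i, (A i).PosSemidef) {p : ℝ} (hp0 : 0 < p) (hp1 : p < 1) :
    eigSum p (∑ i ∈ s, A i) ≤ ∑ i ∈ s, eigSum p (A i) := by
  induction s using Finset.cons_induction with
  | empty => simp [eigSum_zero hp0]
  | cons a s ha ih =>
      rw [Finset.sum_cons, Finset.sum_cons]
      calc eigSum p (A a + ∑ i ∈ s, A i)
          ≤ eigSum p (A a) + eigSum p (∑ i ∈ s, A i) :=
            eigSum_add_le (hA a) (posSemidef_sum s A hA) hp0 hp1
        _ ≤ _ := by linarith

/-- `schattenPow p A` is `‖A‖ₚᵖ = tr |A|ᵖ`, computed as the sum of the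
`p/2`-th real powers of the eigenvalues of `Aᴴ * A` (squared singular values). -/
noncomputable def schattenPow (p : ℝ) {m : ℕ} (A : Matrix (Fin m) (Fin m) ℂ) : ℝ :=
  ∑ i, ((Matrix.isHermitian_conjTranspose_mul_self A).eigenvalues i) ^ (p / 2)

lemma schattenPow_eq_eigSum {m : ℕ} {B : Matrix (Fin m) (Fin m) ℂ} (hB : B.PosSemidef)
    {p : ℝ} : schattenPow p B = eigSum p B := by
  have hH := Matrix.isHermitian_conjTranspose_mul_self B
  have hUU : star (hB.1.eigenvectorUnitary : Matrix (Fin m) (Fin m) ℂ)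
      * (hB.1.eigenvectorUnitary : Matrix (Fin m) (Fin m) ℂ) = 1 :=
    Matrix.mem_unitaryGroup_iff'.mp (hB.1.eigenvectorUnitary).2
  have hBB : Bᴴ * B = (hB.1.eigenvectorUnitary : Matrix (Fin m) (Fin m) ℂ)
      * Matrix.diagonal (fun i => ((hB.1.eigenvalues i ^ 2 : ℝ) : ℂ))
      * star (hB.1.eigenvectorUnitary : Matrix (Fin m) (Fin m) ℂ) := by
    rw [hB.1]
    conv_lhs => rw [hB.1.spectral_theorem, Unitary.conjStarAlgAut_apply]
    have hco : (Matrix.diagonal (RCLike.ofReal ∘ hB.1.eigenvalues) : Matrix (Fin m) (Fin m) ℂ)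
        = Matrix.diagonal (fun i => ((hB.1.eigenvalues i : ℝ) : ℂ)) := rfl
    rw [hco]
    simp only [Matrix.mul_assoc]
    rw [show star (hB.1.eigenvectorUnitary : Matrix (Fin m) (Fin m) ℂ)
        * ((hB.1.eigenvectorUnitary : Matrix (Fin m) (Fin m) ℂ)
          * (Matrix.diagonal (fun i => ((hB.1.eigenvalues i : ℝ) : ℂ))
            * star (hB.1.eigenvectorUnitary : Matrix (Fin m) (Fin m) ℂ)))
        = Matrix.diagonal (fun i => ((hB.1.eigenvalues i : ℝ) : ℂ))
          * star (hB.1.eigenvectorUnitary : Matrix (Fin m) (Fin m) ℂ) from by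
      rw [← Matrix.mul_assoc, hUU, one_mul]]
    rw [← Matrix.mul_assoc (Matrix.diagonal _), Matrix.diagonal_mul_diagonal]
    have hd : (fun i => ((hB.1.eigenvalues i : ℝ) : ℂ) * ((hB.1.eigenvalues i : ℝ) : ℂ))
        = fun i => ((hB.1.eigenvalues i ^ 2 : ℝ) : ℂ) := by
      funext i
      rw [← Complex.ofReal_mul, sq]
    rw [hd]
  have h1 : schattenPow p B
      = ∑ i, (fun x => x ^ (p/2)) (hH.eigenvalues i) := rfl
  rw [h1, sum_f_eig_eq hH (fun i => hB.1.eigenvalues i ^ 2) (fun x => x ^ (p/2))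
      (by rw [hBB, charpoly_unitary_conj, charpoly_diagonal']), eigSum_eq hB.1]
  refine Finset.sum_congr rfl fun i _ => ?_
  rw [← Real.rpow_natCast (hB.1.eigenvalues i) 2, ← Real.rpow_mul (hB.eigenvalues_nonneg i),
    show ((2:ℕ):ℝ) * (p/2) = p by push_cast; ring]

open scoped ComplexOrder in
theorem stmt10 (n : ℕ) (A : Fin n → Matrix (Fin n) (Fin n) ℂ)
    (hA : ∀ i, (A i).PosSemidef) (p : ℝ) (hp0 : 0 < p) (hp1 : p < 1) :
    (n : ℝ) ^ (p - 1) * ∑ i, schattenPow p (A i) ≤ schattenPow p (∑ i, A i) ∧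
      schattenPow p (∑ i, A i) ≤ ∑ i, schattenPow p (A i) := by
  rcases Nat.eq_zero_or_pos n with rfl | hn
  · constructor <;> simp [schattenPow]
  have hnR : (0 : ℝ) < (n : ℝ) := by exact_mod_cast hn
  have hS : (∑ i, A i).PosSemidef := posSemidef_sum _ _ hA
  have hsp : ∀ i, schattenPow p (A i) = eigSum p (A i) := fun i => schattenPow_eq_eigSum (hA i)
  have hspS : schattenPow p (∑ i, A i) = eigSum p (∑ i, A i) := schattenPow_eq_eigSum hS
  constructor
  · -- lower bound
    have hcc := eigSum_concave hp0 hp1 (τ := Fin n) (fun _ => 1/(n:ℝ))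
      (fun _ => by positivity)
      (by rw [Finset.sum_const, Finset.card_univ, Fintype.card_fin, nsmul_eq_mul]
          field_simp)
      (fun i => (((n:ℝ) : ℝ) : ℂ) • A i)
      (fun i => posSemidef_real_smul (hA i) (le_of_lt hnR))
      hS
      (by symm
          refine Finset.sum_congr rfl fun i _ => ?_
          rw [smul_smul, ← Complex.ofReal_mul, one_div_mul_cancel hnR.ne', Complex.ofReal_one,
            one_smul])
    have hrs : ∀ i, eigSum p ((((n:ℝ) : ℝ) : ℂ) • A i) = (n:ℝ) ^ p * eigSum p (A i) :=
      fun i => eigSum_real_smul (hA i) (le_of_lt hnR) hp0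
    rw [hspS]
    calc (n:ℝ) ^ (p-1) * ∑ i, schattenPow p (A i)
        = ∑ i, (1/(n:ℝ)) * eigSum p ((((n:ℝ) : ℝ) : ℂ) • A i) := by
          rw [Finset.mul_sum]
          refine Finset.sum_congr rfl fun i _ => ?_
          rw [hrs i, hsp i, Real.rpow_sub hnR, Real.rpow_one]
          ring
      _ ≤ eigSum p (∑ i, A i) := hcc
  · rw [hspS, Finset.sum_congr rfl fun i _ => hsp i]
    exact eigSum_sum_le _ _ hA hp0 hp1
end

section
/- Let A₁,…,Aₙ be bounded operators on a Hilbert space with Aᵢ*Aⱼ = 0 for all i ≠ j, and let t₁,…,tₙ be nonnegative reals with ∑ᵢ tᵢ = 1. Then ‖∑ᵢ √tᵢ · Aᵢ‖² ≤ ∑ᵢ tᵢ‖Aᵢ − ∑ⱼ tⱼAⱼ‖² + ‖∑ⱼ tⱼAⱼ‖², where ‖·‖ is the operator norm. -/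
set_option maxHeartbeats 800000
set_option synthInstance.maxHeartbeats 400000


theorem stmt17 {H : Type*} [NormedAddCommGroup H] [InnerProductSpace ℂ H]
    [CompleteSpace H] (n : ℕ) (A : Fin n → H →L[ℂ] H)
    (horth : ∀ i j, i ≠ j → ContinuousLinearMap.adjoint (A i) * A j = 0)
    (t : Fin n → ℝ) (ht : ∀ i, 0 ≤ t i) (hsum : ∑ i, t i = 1) :
    ‖∑ i, Real.sqrt (t i) • A i‖ ^ 2 ≤
      ∑ i, t i * ‖A i - ∑ j, t j • A j‖ ^ 2 + ‖∑ j, t j • A j‖ ^ 2 := by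
  set M : H →L[ℂ] H := ∑ j, t j • A j with hM
  set B : H →L[ℂ] H := ∑ i, Real.sqrt (t i) • A i with hB
  have hstar : ∀ (i j : Fin n), i ≠ j → star (A i) * A j = 0 := by
    intro i j hij
    rw [ContinuousLinearMap.star_eq_adjoint]
    exact horth i j hij
  have hstarM : star M = ∑ j, t j • star (A j) := by
    rw [hM, star_sum]
    simp [star_smul]
  have h1 : star B * B = ∑ i, t i • (star (A i) * A i) := by
    rw [hB, star_sum]
    simp only [star_smul, star_trivial]
    rw [Finset.sum_mul_sum]
    refine Finset.sum_congr rfl fun i _ => ?_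
    rw [Finset.sum_eq_single i]
    · rw [smul_mul_smul_comm, Real.mul_self_sqrt (ht i)]
    · intro j _ hji
      rw [smul_mul_smul_comm, hstar i j (Ne.symm hji), smul_zero]
    · intro h; exact absurd (Finset.mem_univ i) h
  have h2 : ∑ i, t i • (star (A i - M) * (A i - M)) + star M * M
      = ∑ i, t i • (star (A i) * A i) := by
    have expand : ∀ i, t i • (star (A i - M) * (A i - M))
        = t i • (star (A i) * A i) - (t i • star (A i)) * M
          - star M * (t i • A i) + t i • (star M * M) := by
      intro i
      rw [star_sub, sub_mul, mul_sub, mul_sub]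
      simp only [smul_mul_assoc, mul_smul_comm]
      module
    rw [Finset.sum_congr rfl fun i _ => expand i]
    simp only [Finset.sum_add_distrib, Finset.sum_sub_distrib, ← Finset.sum_mul,
      ← Finset.mul_sum, ← hstarM, ← Finset.smul_sum]
    rw [← Finset.sum_smul, hsum, one_smul]
    abel
  have hnorm : ‖B‖ ^ 2 = ‖star B * B‖ := by
    rw [CStarRing.norm_star_mul_self, sq]
  rw [hnorm, h1, ← h2]
  calc ‖∑ i, t i • (star (A i - M) * (A i - M)) + star M * M‖
      ≤ ‖∑ i, t i • (star (A i - M) * (A i - M))‖ + ‖star M * M‖ := norm_add_le _ _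
    _ ≤ (∑ i, ‖t i • (star (A i - M) * (A i - M))‖) + ‖star M * M‖ := by
        gcongr; exact norm_sum_le _ _
    _ = ∑ i, t i * ‖A i - M‖ ^ 2 + ‖M‖ ^ 2 := by
        rw [CStarRing.norm_star_mul_self, ← sq]
        congr 1
        refine Finset.sum_congr rfl fun i _ => ?_
        rw [norm_smul, Real.norm_of_nonneg (ht i), CStarRing.norm_star_mul_self, ← sq]
end
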